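/- Let m be a positive integer and let s, t be positive real numbers such that m/s + m/t ≤ 1 (i.e. the point (m,m) lies in the closure of the open region {(x,y) ∈ ℝ²_{≥0} : x/s + y/t < 1}). Then the number of pairs (x,y) of nonnegative integers with x/s + y/t < 1 is at least m(2m+1). (In the paper's notation: σ̄_{2,m} ≥ m(2m+1).) -/

import Mathlib

/-- σ̄_{2,m} ≥ m(2m+1) : if (m,m) lies in the closure of the open region
{(x,y) : x/s + y/t < 1}, then the number of lattice points of that region
is at least m(2m+1). -/
theorem stmt_1 (m : ℕ) (hm : 0 < m) (s t : ℝ) (hs : 0 < s) (ht : 0 < t)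
    (h : (m : ℝ) / s + (m : ℝ) / t ≤ 1) :
    m * (2 * m + 1) ≤
      Set.ncard {p : ℕ × ℕ | (p.1 : ℝ) / s + (p.2 : ℝ) / t < 1} := by
  classical
  have hst : (m : ℝ) * t + m * s ≤ s * t := by
    rw [div_add_div _ _ hs.ne' ht.ne', div_le_one (mul_pos hs ht)] at h
    linarith
  set X := Nat.ceil s with hX
  set N : ℕ → ℕ := fun y =>
    ((Finset.range X).filter (fun x : ℕ => (x : ℝ) / s + (y : ℝ) / t < 1)).card with hN
  -- each row y contains at least s * (1 - y/t) points
  have lb : ∀ y : ℕ, s * (1 - (y : ℝ) / t) ≤ (N y : ℝ) := by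
    intro y
    rcases le_or_gt (s * (1 - (y : ℝ) / t)) 0 with hc | hc
    · exact hc.trans (Nat.cast_nonneg _)
    · have hsub : Finset.range ⌈s * (1 - (y : ℝ) / t)⌉₊ ⊆
          (Finset.range X).filter (fun x : ℕ => (x : ℝ) / s + (y : ℝ) / t < 1) := by
        intro x hx
        rw [Finset.mem_range] at hx
        have hxc : (x : ℝ) < s * (1 - (y : ℝ) / t) := Nat.lt_ceil.mp hx
        have hyt : 0 ≤ (y : ℝ) / t := div_nonneg (Nat.cast_nonneg y) ht.le
        have hcs : s * (1 - (y : ℝ) / t) ≤ s := by nlinarith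
        refine Finset.mem_filter.mpr ⟨Finset.mem_range.mpr ?_, ?_⟩
        · exact Nat.lt_ceil.mpr (lt_of_lt_of_le hxc hcs)
        · have hxs : (x : ℝ) / s < 1 - (y : ℝ) / t :=
            (div_lt_iff₀ hs).mpr (by nlinarith)
          linarith
      have hcard : ⌈s * (1 - (y : ℝ) / t)⌉₊ ≤ N y := by
        simpa [hN] using Finset.card_le_card hsub
      calc s * (1 - (y : ℝ) / t) ≤ (⌈s * (1 - (y : ℝ) / t)⌉₊ : ℝ) := Nat.le_ceil _
        _ ≤ (N y : ℝ) := Nat.cast_le.mpr hcard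
  -- paired rows y and 2m-1-y together contain at least 2m+1 points
  have key : ∀ y, y < m → 2 * m + 1 ≤ N y + N (2 * m - 1 - y) := by
    intro y hy
    set k := 2 * m - 1 - y with hk
    have hky : y + k + 1 = 2 * m := by omega
    have hkcast : (k : ℝ) = 2 * (m : ℝ) - 1 - y := by
      have := congrArg (fun n : ℕ => (n : ℝ)) hky
      push_cast at this
      linarith
    have h1 := lb y
    have h2 := lb k
    have hdiv : s * (2 * (m : ℝ) - 1) / t < 2 * s - 2 * m := by
      rw [div_lt_iff₀ ht]
      nlinarith
    have hcomb : s * (1 - (y : ℝ) / t) + s * (1 - (k : ℝ) / t)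
        = 2 * s - s * (2 * (m : ℝ) - 1) / t := by
      rw [hkcast]; ring
    have hsum : (2 * m : ℝ) < (N y : ℝ) + (N k : ℝ) := by
      nlinarith [h1, h2, hcomb, hdiv]
    have hnat : 2 * m < N y + N k := by exact_mod_cast hsum
    omega
  -- the union of the rows y = 0 .. 2m-1
  set T : Finset (ℕ × ℕ) := (Finset.range (2 * m)).biUnion
    (fun y => ((Finset.range X).filter (fun x : ℕ => (x : ℝ) / s + (y : ℝ) / t < 1)).image
      (fun x => (x, y))) with hT
  have hTcard : T.card = ∑ y ∈ Finset.range (2 * m), N y := by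
    rw [hT, Finset.card_biUnion]
    · refine Finset.sum_congr rfl fun y _ => ?_
      rw [Finset.card_image_of_injective _
        (fun a b hab => by simpa using congrArg Prod.fst hab)]
    · intro y1 _ y2 _ hne
      rw [Function.onFun, Finset.disjoint_left]
      intro p hp1 hp2
      simp only [Finset.mem_image, Finset.mem_filter] at hp1 hp2
      obtain ⟨x1, _, rfl⟩ := hp1
      obtain ⟨x2, _, h2⟩ := hp2
      exact hne (by simpa using (congrArg Prod.snd h2).symm)
  have hsplit : ∑ y ∈ Finset.range (2 * m), N y
      = ∑ y ∈ Finset.range m, (N y + N (2 * m - 1 - y)) := by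
    rw [two_mul, Finset.sum_range_add,
      ← Finset.sum_range_reflect (fun i => N (m + i)) m, ← Finset.sum_add_distrib]
    refine Finset.sum_congr rfl fun j hj => ?_
    rw [Finset.mem_range] at hj
    have hje : m + (m - 1 - j) = m + m - 1 - j := by omega
    rw [hje]
  have hbound : m * (2 * m + 1) ≤ T.card := by
    rw [hTcard, hsplit]
    calc m * (2 * m + 1) = ∑ _y ∈ Finset.range m, (2 * m + 1) := by
          rw [Finset.sum_const, Finset.card_range, smul_eq_mul]
      _ ≤ ∑ y ∈ Finset.range m, (N y + N (2 * m - 1 - y)) :=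
          Finset.sum_le_sum fun y hy => key y (Finset.mem_range.mp hy)
  have hfin : {p : ℕ × ℕ | (p.1 : ℝ) / s + (p.2 : ℝ) / t < 1}.Finite := by
    apply Set.Finite.subset ((Set.finite_Iio ⌈s⌉₊).prod (Set.finite_Iio ⌈t⌉₊))
    intro p hp
    simp only [Set.mem_setOf_eq] at hp
    have h1 : 0 ≤ (p.1 : ℝ) / s := div_nonneg (Nat.cast_nonneg _) hs.le
    have h2 : 0 ≤ (p.2 : ℝ) / t := div_nonneg (Nat.cast_nonneg _) ht.le
    constructor
    · exact Nat.lt_ceil.mpr ((div_lt_one hs).mp (by linarith))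
    · exact Nat.lt_ceil.mpr ((div_lt_one ht).mp (by linarith))
  have hTS : ↑T ⊆ {p : ℕ × ℕ | (p.1 : ℝ) / s + (p.2 : ℝ) / t < 1} := by
    intro p hp
    simp only [hT, Finset.coe_biUnion, Set.mem_iUnion, Finset.mem_coe,
      Finset.mem_image, Finset.mem_filter] at hp
    obtain ⟨y, _, x, ⟨_, hlt⟩, rfl⟩ := hp
    exact hlt
  calc m * (2 * m + 1) ≤ T.card := hbound
    _ = (↑T : Set (ℕ × ℕ)).ncard := (Set.ncard_coe_finset T).symm
    _ ≤ _ := Set.ncard_le_ncard hTS hfin
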